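/- Let n ≥ 1 be an integer, let q ∈ ℂ be nonzero and not a root of unity, and let λ be any Young diagram. Then Q_λ(−q^{2n}, q) = Q_λ(q^{2n}, −q). -/
import Mathlib


open scoped BigOperators

/-- The cells of a Young diagram in the paper's 1-indexed coordinates. -/
def pcells (μ : YoungDiagram) : Finset (ℕ × ℕ) :=
  μ.cells.image (fun p => (p.1 + 1, p.2 + 1))

/-- `prow μ i` is λ_i, the number of cells in the i-th row (1-indexed). -/
def prow (μ : YoungDiagram) (i : ℕ) : ℕ := μ.rowLen (i - 1)

/-- `pcol μ j` is λ'_j, the number of cells in the j-th column (1-indexed). -/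
def pcol (μ : YoungDiagram) (j : ℕ) : ℕ := μ.colLen (j - 1)

/-- The hook length h(i,j) = λ_i − i + λ'_j − j + 1 of a cell (1-indexed). -/
def hookP (μ : YoungDiagram) (i j : ℕ) : ℤ :=
  (prow μ i : ℤ) - i + (pcol μ j : ℤ) - j + 1

/-- The quantity d(i,j) of the paper (1-indexed cells). -/
def dP (μ : YoungDiagram) (i j : ℕ) : ℤ :=
  if i ≤ j then (prow μ i : ℤ) + (prow μ j : ℤ) - i - j + 1
  else -(pcol μ i : ℤ) - (pcol μ j : ℤ) + i + j - 1

/-- The function Q_λ(r,q) of Wenzl, as in the paper. -/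
noncomputable def Qpoly (μ : YoungDiagram) (r q : ℂ) : ℂ :=
  (∏ p ∈ (pcells μ).filter (fun p => p.1 = p.2),
      (r * q ^ ((prow μ p.2 : ℤ) - (pcol μ p.2 : ℤ))
        - r⁻¹ * q ^ (-(prow μ p.2 : ℤ) + (pcol μ p.2 : ℤ))
        + q ^ ((prow μ p.2 : ℤ) + (pcol μ p.2 : ℤ) - 2 * (p.2 : ℤ) + 1)
        - q ^ (-(prow μ p.2 : ℤ) - (pcol μ p.2 : ℤ) + 2 * (p.2 : ℤ) - 1))
      / (q ^ hookP μ p.1 p.2 - q ^ (-hookP μ p.1 p.2)))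
  *
  (∏ p ∈ (pcells μ).filter (fun p => p.1 ≠ p.2),
      (r * q ^ dP μ p.1 p.2 - r⁻¹ * q ^ (-dP μ p.1 p.2))
      / (q ^ hookP μ p.1 p.2 - q ^ (-hookP μ p.1 p.2)))

lemma mem_pcells (μ : YoungDiagram) (i j : ℕ) :
    (i, j) ∈ pcells μ ↔ 1 ≤ i ∧ 1 ≤ j ∧ (i - 1, j - 1) ∈ μ := by
  simp only [pcells, Finset.mem_image, YoungDiagram.mem_cells, Prod.ext_iff]
  constructor
  · rintro ⟨⟨a, b⟩, hm, h1, h2⟩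
    simp only at h1 h2
    refine ⟨by omega, by omega, ?_⟩
    have : i - 1 = a ∧ j - 1 = b := by omega
    rw [this.1, this.2]; exact hm
  · rintro ⟨hi, hj, hm⟩
    exact ⟨(i - 1, j - 1), hm, by omega, by omega⟩

lemma fiber_even (μ : YoungDiagram) (m : ℕ)
    (hpar : Even (prow μ m + pcol μ m)) :
    Even ((Finset.filter (fun p => max p.1 p.2 = m)
      ((pcells μ).filter (fun p => p.1 ≠ p.2))).card) := by
  classical
  set A : Finset (ℕ × ℕ) :=
    (Finset.Icc 1 (min (m - 1) (pcol μ m))).image (fun i => (i, m)) with hA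
  set B : Finset (ℕ × ℕ) :=
    (Finset.Icc 1 (min (m - 1) (prow μ m))).image (fun j => (m, j)) with hB
  have hmemA : ∀ i j : ℕ, ((i, j) ∈ A ↔ j = m ∧ 1 ≤ i ∧ i ≤ m - 1 ∧ i ≤ pcol μ m) := by
    intro i j
    simp only [hA, Finset.mem_image, Finset.mem_Icc, Prod.ext_iff]
    constructor
    · rintro ⟨t, ht, rfl, rfl⟩; omega
    · rintro ⟨rfl, h1, h2, h3⟩; exact ⟨i, by omega, rfl, rfl⟩
  have hmemB : ∀ i j : ℕ, ((i, j) ∈ B ↔ i = m ∧ 1 ≤ j ∧ j ≤ m - 1 ∧ j ≤ prow μ m) := by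
    intro i j
    simp only [hB, Finset.mem_image, Finset.mem_Icc, Prod.ext_iff]
    constructor
    · rintro ⟨t, ht, rfl, rfl⟩; omega
    · rintro ⟨rfl, h1, h2, h3⟩; exact ⟨j, by omega, rfl, rfl⟩
  have hcol : ∀ i : ℕ, 1 ≤ i → 1 ≤ m → ((i - 1, m - 1) ∈ μ ↔ i ≤ pcol μ m) := by
    intro i hi hm
    rw [YoungDiagram.mem_iff_lt_colLen]
    show _ ↔ i ≤ μ.colLen (m - 1)
    omega
  have hrow : ∀ j : ℕ, 1 ≤ j → 1 ≤ m → ((m - 1, j - 1) ∈ μ ↔ j ≤ prow μ m) := by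
    intro j hj hm
    rw [YoungDiagram.mem_iff_lt_rowLen]
    show _ ↔ j ≤ μ.rowLen (m - 1)
    omega
  have hFeq : (Finset.filter (fun p => max p.1 p.2 = m)
      ((pcells μ).filter (fun p => p.1 ≠ p.2))) = A ∪ B := by
    ext ⟨i, j⟩
    simp only [Finset.mem_filter, mem_pcells, Finset.mem_union, hmemA, hmemB]
    constructor
    · rintro ⟨⟨⟨hi, hj, hmem⟩, hne⟩, hmax⟩
      rcases Nat.lt_or_ge i j with h | h
      · left
        have hjm : j = m := by omega
        subst hjm
        have := (hcol i hi (by omega)).mp hmem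
        omega
      · right
        have him : i = m := by omega
        subst him
        have := (hrow j hj (by omega)).mp hmem
        omega
    · rintro (⟨rfl, h1, h2, h3⟩ | ⟨rfl, h1, h2, h3⟩)
      · refine ⟨⟨⟨h1, by omega, (hcol i h1 (by omega)).mpr h3⟩, by omega⟩, by omega⟩
      · refine ⟨⟨⟨by omega, h1, (hrow j h1 (by omega)).mpr h3⟩, by omega⟩, by omega⟩
  have hdisj : Disjoint A B := by
    rw [Finset.disjoint_left]
    rintro ⟨i, j⟩ ha hb
    rw [hmemA] at ha; rw [hmemB] at hb
    omega
  have hcardA : A.card = min (m - 1) (pcol μ m) := by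
    rw [hA, Finset.card_image_of_injective _ (fun a b h => (Prod.ext_iff.mp h).1),
        Nat.card_Icc]; omega
  have hcardB : B.card = min (m - 1) (prow μ m) := by
    rw [hB, Finset.card_image_of_injective _ (fun a b h => (Prod.ext_iff.mp h).2),
        Nat.card_Icc]; omega
  rw [hFeq, Finset.card_union_of_disjoint hdisj, hcardA, hcardB]
  rcases Nat.eq_zero_or_pos m with rfl | hm1
  · simp
  · have hiff : (m ≤ prow μ m ↔ m ≤ pcol μ m) := by
      have h1 := @YoungDiagram.mem_iff_lt_rowLen μ (m-1) (m-1)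
      have h2 := @YoungDiagram.mem_iff_lt_colLen μ (m-1) (m-1)
      have h3 : (m - 1 < μ.rowLen (m-1)) ↔ (m - 1 < μ.colLen (m-1)) :=
        (h1.symm.trans h2)
      unfold prow pcol
      constructor
      · intro h; have := h3.mp (by omega); omega
      · intro h; have := h3.mpr (by omega); omega
    rw [Nat.even_iff] at hpar ⊢
    rcases le_or_gt m (prow μ m) with h | h
    · have h2 := hiff.mp h
      omega
    · have h2 : pcol μ m < m := by
        by_contra hc
        exact absurd (hiff.mpr (by omega)) (by omega)
      omega

lemma neg_one_zpow_congr {a b : ℤ} (h : a % 2 = b % 2) : (-1:ℂ)^a = (-1:ℂ)^b := by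
  have he : Even (a - b) := by rw [Int.even_iff]; omega
  obtain ⟨k, hk⟩ := he
  have ha : a = b + (k + k) := by omega
  rw [ha, zpow_add₀ (by norm_num : (-1:ℂ) ≠ 0), Even.neg_one_zpow ⟨k, rfl⟩, mul_one]

lemma sign_prod (μ : YoungDiagram) :
    ∏ p ∈ (pcells μ).filter (fun p => p.1 ≠ p.2),
      ((-1:ℂ)) ^ (dP μ p.1 p.2 + hookP μ p.1 p.2 + 1) = 1 := by
  classical
  have key : ∀ p ∈ (pcells μ).filter (fun p : ℕ × ℕ => p.1 ≠ p.2),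
      ((-1:ℂ)) ^ (dP μ p.1 p.2 + hookP μ p.1 p.2 + 1)
        = (fun m => ((-1:ℂ)) ^ ((prow μ m : ℤ) + (pcol μ m : ℤ) + 1))
            ((fun p : ℕ × ℕ => max p.1 p.2) p) := by
    rintro ⟨i, j⟩ hp
    simp only [Finset.mem_filter] at hp
    obtain ⟨-, hne⟩ := hp
    simp only
    apply neg_one_zpow_congr
    rcases le_or_gt i j with h | h
    · have hm : max i j = j := max_eq_right h
      rw [hm]; unfold dP hookP; rw [if_pos h]; omega
    · have hm : max i j = i := max_eq_left h.le
      rw [hm]; unfold dP hookP; rw [if_neg (by omega)]; omega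
  rw [Finset.prod_congr rfl key,
      Finset.prod_comp (fun m => ((-1:ℂ)) ^ ((prow μ m : ℤ) + (pcol μ m : ℤ) + 1))
        (fun p : ℕ × ℕ => max p.1 p.2)]
  apply Finset.prod_eq_one
  intro m hm
  rcases Int.even_or_odd ((prow μ m : ℤ) + (pcol μ m : ℤ) + 1) with he | ho
  · rw [he.neg_one_zpow, one_pow]
  · rw [ho.neg_one_zpow]
    have hpar : Even (prow μ m + pcol μ m) := by
      rw [Int.odd_iff] at ho; rw [Nat.even_iff]; omega
    obtain ⟨k, hk⟩ := fiber_even μ m hpar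
    rw [hk, Even.neg_one_pow ⟨k, rfl⟩]

lemma hnegq (q : ℂ) (k : ℤ) : (-q)^k = (-1:ℂ)^k * q^k := by
  rw [← neg_one_mul, mul_zpow]

lemma negexp (k : ℤ) : (-1:ℂ)^(-k) = (-1:ℂ)^k := by
  rw [zpow_neg, ← inv_zpow, inv_neg, inv_one]

lemma neg_one_zpow_ne_zero (k : ℤ) : (-1:ℂ)^k ≠ 0 :=
  zpow_ne_zero k (by norm_num)

lemma diag_helper (s R A A' B B' : ℂ) (hs : s ≠ 0) :
    (-R * A - (-R)⁻¹ * A' + B - B') / (B - B') =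
      (R * (-s * A) - R⁻¹ * (-s * A') + s * B - s * B') / (s * B - s * B') := by
  rw [inv_neg,
      show R * (-s*A) - R⁻¹*(-s*A') + s*B - s*B' = s * (-R*A - -R⁻¹*A' + B - B') from by ring,
      show s*B - s*B' = s * (B - B') from by ring,
      mul_div_mul_left _ _ hs]

lemma offdiag_helper (u t R A A' B B' : ℂ) (hu : u * u = 1) (ht : t ≠ 0) :
    (-R * A - (-R)⁻¹ * A') / (B - B') =
      u * t * (-1) * ((R * (u * A) - R⁻¹ * (u * A')) / (t * B - t * B')) := by
  rw [inv_neg,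
      show t*B - t*B' = t * (B - B') from by ring,
      ← mul_div_assoc,
      show u*t*(-1) * (R*(u*A) - R⁻¹*(u*A')) = t * (-R*A - -R⁻¹*A') from by
        linear_combination (t*R⁻¹*A' - t*R*A) * hu,
      mul_div_mul_left _ _ ht]

/-- Q_λ(−q^{2n}, q) = Q_λ(q^{2n}, −q) for q nonzero and not a root of unity. -/
theorem stmt0 (n : ℕ) (hn : 1 ≤ n) (q : ℂ) (hq0 : q ≠ 0)
    (hq : ∀ m : ℕ, 1 ≤ m → q ^ m ≠ 1) (μ : YoungDiagram) :
    Qpoly μ (-(q ^ (2 * n))) q = Qpoly μ (q ^ (2 * n)) (-q) := by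
  classical
  unfold Qpoly
  congr 1
  · -- diagonal product
    apply Finset.prod_congr rfl
    intro p hp
    simp only [Finset.mem_filter] at hp
    obtain ⟨-, hpe⟩ := hp
    set b : ℤ := (prow μ p.2 : ℤ) + (pcol μ p.2 : ℤ) - 2 * (p.2 : ℤ) + 1 with hbdef
    have hh : hookP μ p.1 p.2 = b := by
      unfold hookP; rw [hpe, hbdef]; push_cast; ring
    have he4 : -(prow μ p.2 : ℤ) - (pcol μ p.2 : ℤ) + 2 * (p.2 : ℤ) - 1 = -b := by
      rw [hbdef]; ring
    rw [hh, he4]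
    simp only [hnegq q, negexp]
    set s : ℂ := (-1:ℂ)^b with hsdef
    have hs : s ≠ 0 := neg_one_zpow_ne_zero b
    have key2 : ∀ k : ℤ, (k + b) % 2 = 1 → (-1:ℂ)^k = -s := by
      intro k hk
      have h1 : (-1:ℂ)^k = (-1:ℂ)^(b+1) := neg_one_zpow_congr (by omega)
      rw [h1, zpow_add₀ (by norm_num : (-1:ℂ) ≠ 0), zpow_one, hsdef]
      ring
    have E1 : (-1:ℂ)^((prow μ p.2 : ℤ) - (pcol μ p.2 : ℤ)) = -s := key2 _ (by omega)
    have E2 : (-1:ℂ)^(-(prow μ p.2 : ℤ) + (pcol μ p.2 : ℤ)) = -s := key2 _ (by omega)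
    rw [E1, E2]
    exact diag_helper s (q ^ (2*n)) _ _ _ _ hs
  · -- off-diagonal product
    have step : ∀ p ∈ (pcells μ).filter (fun p : ℕ × ℕ => p.1 ≠ p.2),
        (-(q ^ (2*n)) * q ^ dP μ p.1 p.2 - (-(q ^ (2*n)))⁻¹ * q ^ (-dP μ p.1 p.2))
          / (q ^ hookP μ p.1 p.2 - q ^ (-hookP μ p.1 p.2))
        = ((-1:ℂ)) ^ (dP μ p.1 p.2 + hookP μ p.1 p.2 + 1) *
          ((q ^ (2*n) * (-q) ^ dP μ p.1 p.2 - (q ^ (2*n))⁻¹ * (-q) ^ (-dP μ p.1 p.2))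
          / ((-q) ^ hookP μ p.1 p.2 - (-q) ^ (-hookP μ p.1 p.2))) := by
      intro p hp
      set d : ℤ := dP μ p.1 p.2
      set h : ℤ := hookP μ p.1 p.2
      simp only [hnegq q, negexp]
      rw [show ((-1:ℂ))^(d + h + 1)
            = (-1:ℂ)^d * (-1:ℂ)^h * (-1) from by
          rw [zpow_add₀ (by norm_num : (-1:ℂ) ≠ 0),
              zpow_add₀ (by norm_num : (-1:ℂ) ≠ 0), zpow_one]]
      have hu : (-1:ℂ)^d * (-1:ℂ)^d = 1 := by
        rw [← zpow_add₀ (by norm_num : (-1:ℂ) ≠ 0)]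
        exact Even.neg_one_zpow ⟨d, rfl⟩
      exact offdiag_helper ((-1:ℂ)^d) ((-1:ℂ)^h) (q ^ (2*n)) _ _ _ _ hu
        (neg_one_zpow_ne_zero h)
    rw [Finset.prod_congr rfl step, Finset.prod_mul_distrib, sign_prod, one_mul]
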